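/- arXiv:0801.3094 — 2 statements merged into one kernel-verified Lean document; each statement's English description precedes it below -/
import Mathlib

section
/- There exists a constant c₂ > 1 with the following property. For each odd integer p ≥ 3 let n(p) be any natural number with n(p) < c₂·log₂ p. Then ‖Q_{n(p),p} − U‖ → 1 as p → ∞ along odd integers; that is, for every δ > 0 there exists P₀ such that for every odd p ≥ P₀ one has ‖Q_{n(p),p} − U‖ > 1 − δ. -/
open MeasureTheory

/-- `ν` is the infinite product over `ℕ` of the probability measure on `{0,1} ⊆ ℤ`
assigning probability `2/5` to `1` and `3/5` to `0`: it is characterized by its values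
on cylinder sets, namely the probability that the first `n` coordinates take prescribed
values `c 0, …, c (n-1)` is `∏_{i<n} (2/5 if c i = 1, 3/5 if c i = 0, else 0)`.
(Taking `n = 0` shows `ν` is a probability measure.) -/
def IsBiasedProductMeasure (ν : Measure (ℕ → ℤ)) : Prop :=
  ∀ (n : ℕ) (c : ℕ → ℤ),
    ν {ω : ℕ → ℤ | ∀ i < n, ω i = c i} =
      ∏ i ∈ Finset.range n,
        (if c i = 1 then (2 / 5 : ENNReal) else if c i = 0 then (3 / 5 : ENNReal) else 0)

/-- `X n ω = ∑_{i=0}^{n-1} 2^(n-1-i) ω i`, the position after `n` steps of the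
process (before reduction mod `p`). -/
def cdgX (n : ℕ) (ω : ℕ → ℤ) : ℤ := ∑ i ∈ Finset.range n, 2 ^ (n - 1 - i) * ω i

/-- The total variation distance `‖Q_{n,p} − U‖ = (1/2) ∑_{s ∈ ℤ/pℤ} |Q_{n,p}(s) − 1/p|`,
where `Q_{n,p}(s) = ν {ω | X_n(ω) ≡ s (mod p)}` (the sum over `ℤ/pℤ` is written as a
sum over `s ∈ {0, …, p-1}`, each residue occurring exactly once). -/
noncomputable def cdgTV (ν : Measure (ℕ → ℤ)) (n p : ℕ) : ℝ :=
  (1 / 2) * ∑ s ∈ Finset.range p,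
    |(ν {ω : ℕ → ℤ | ((cdgX n ω : ZMod p)) = (s : ZMod p)}).toReal - 1 / (p : ℝ)|

open Finset

noncomputable def wR (n : ℕ) (b : Fin n → Bool) : ℝ := ∏ i : Fin n, (if b i then (2/5 : ℝ) else 3/5)

def ob {n : ℕ} (b : Fin n → Bool) : ℕ := (univ.filter fun i => b i = true).card

lemma wR_nonneg (n : ℕ) (b : Fin n → Bool) : 0 ≤ wR n b :=
  Finset.prod_nonneg fun i _ => by by_cases h : b i <;> simp [h] <;> norm_num

lemma sum_prod_ite (n : ℕ) (x y : ℝ) :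
    ∑ b : Fin n → Bool, ∏ i : Fin n, (if b i then x else y) = (x + y) ^ n := by
  classical
  have h := Finset.prod_univ_sum (fun _ : Fin n => (Finset.univ : Finset Bool))
    (fun _ j => if j then x else y)
  simp only [Fintype.piFinset_univ] at h
  rw [← h]
  simp [Fintype.sum_bool]

lemma prod_ite_eq_pow (n : ℕ) (b : Fin n → Bool) (x y : ℝ) :
    ∏ i : Fin n, (if b i then x else y) = x ^ ob b * y ^ (n - ob b) := by
  classical
  rw [Finset.prod_ite (fun _ => x) (fun _ => y), Finset.prod_const, Finset.prod_const]
  congr 2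
  have := Finset.card_filter_add_card_filter_not (s := (univ : Finset (Fin n)))
    (fun i => b i = true)
  simp only [Finset.card_univ, Fintype.card_fin] at this
  unfold ob
  omega

lemma sum_wR_univ (n : ℕ) : ∑ b : Fin n → Bool, wR n b = 1 := by
  have := sum_prod_ite n (2/5) (3/5)
  simp only [wR]; rw [this]; norm_num

noncomputable def rrC : ℝ := (27/22 : ℝ) ^ (-(9/20 : ℝ)) * (12/11)
noncomputable def BBC : ℝ := (11/9 : ℝ) ^ ((9/20 : ℝ)) * (20/11)

lemma rrC_pos : 0 < rrC := by unfold rrC; positivity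

lemma sum_wR_mul_pow (n : ℕ) (t : ℝ) :
    ∑ b : Fin n → Bool, wR n b * t ^ ob b = (2/5*t + 3/5) ^ n := by
  have h : ∀ b : Fin n → Bool, wR n b * t ^ ob b
      = ∏ i, (if b i then (2/5*t : ℝ) else 3/5) := by
    intro b
    have ht : (t:ℝ) ^ ob b = ∏ i : Fin n, (if b i then t else 1) := by
      rw [prod_ite_eq_pow, one_pow, mul_one]
    rw [wR, ht, ← Finset.prod_mul_distrib]
    refine Finset.prod_congr rfl fun i _ => by by_cases h : b i <;> simp [h]
  rw [Finset.sum_congr rfl fun b _ => h b, sum_prod_ite]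

lemma sum_pow_ob (n : ℕ) (t : ℝ) : ∑ b : Fin n → Bool, t ^ ob b = (t + 1) ^ n := by
  have h : ∀ b : Fin n → Bool, t ^ ob b = ∏ i, (if b i then t else 1) := fun b => by
    rw [prod_ite_eq_pow, one_pow, mul_one]
  rw [Finset.sum_congr rfl fun b _ => h b, sum_prod_ite]

lemma tail_bound (n : ℕ) :
    ∑ b ∈ univ.filter (fun b : Fin n → Bool => (9/20:ℝ)*n < ob b), wR n b ≤ rrC ^ n := by
  have hb1 : (1:ℝ) ≤ 27/22 := by norm_num
  have hpos : (0:ℝ) < 27/22 := by norm_num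
  have step1 : ∑ b ∈ univ.filter (fun b : Fin n → Bool => (9/20:ℝ)*n < ob b), wR n b
      ≤ ∑ b ∈ univ.filter (fun b : Fin n → Bool => (9/20:ℝ)*n < ob b),
          wR n b * (27/22:ℝ)^((ob b : ℝ) - (9/20)*n) := by
    refine Finset.sum_le_sum fun b hb' => ?_
    simp only [Finset.mem_filter] at hb'
    nth_rewrite 1 [← mul_one (wR n b)]
    refine mul_le_mul_of_nonneg_left ?_ (wR_nonneg n b)
    calc (1:ℝ) = (27/22:ℝ)^(0:ℝ) := (Real.rpow_zero _).symm
    _ ≤ _ := Real.rpow_le_rpow_of_exponent_le hb1 (by linarith [hb'.2])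
  have step2 : ∑ b ∈ univ.filter (fun b : Fin n → Bool => (9/20:ℝ)*n < ob b),
          wR n b * (27/22:ℝ)^((ob b : ℝ) - (9/20)*n)
      ≤ ∑ b : Fin n → Bool, wR n b * (27/22:ℝ)^((ob b : ℝ) - (9/20)*n) := by
    refine Finset.sum_le_sum_of_subset_of_nonneg (Finset.filter_subset _ _) fun b _ _ => ?_
    have := wR_nonneg n b
    positivity
  have heach : ∀ b : Fin n → Bool, wR n b * (27/22:ℝ)^((ob b : ℝ) - (9/20)*n)
      = (wR n b * (27/22:ℝ)^(ob b)) * (27/22:ℝ)^(-((9/20:ℝ)*n)) := by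
    intro b
    rw [sub_eq_add_neg, Real.rpow_add hpos, Real.rpow_natCast, mul_assoc]
  have step3 : ∑ b : Fin n → Bool, wR n b * (27/22:ℝ)^((ob b : ℝ) - (9/20)*n)
      = (12/11:ℝ)^n * (27/22:ℝ)^(-((9/20:ℝ)*n)) := by
    rw [Finset.sum_congr rfl fun b _ => heach b, ← Finset.sum_mul, sum_wR_mul_pow]
    norm_num
  have step4 : (12/11:ℝ)^n * (27/22:ℝ)^(-((9/20:ℝ)*n)) = rrC ^ n := by
    have : (27/22:ℝ)^(-((9/20:ℝ)*n)) = ((27/22:ℝ)^(-(9/20:ℝ)))^n := by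
      rw [← Real.rpow_natCast ((27/22:ℝ)^(-(9/20:ℝ))) n, ← Real.rpow_mul hpos.le]
      ring_nf
    rw [this, rrC, mul_pow]
    ring
  rw [step3, step4] at step2
  linarith

lemma count_bound (n : ℕ) :
    ((univ.filter (fun b : Fin n → Bool => ¬ ((9/20:ℝ)*n < ob b))).card : ℝ) ≤ BBC ^ n := by
  have hb1 : (1:ℝ) ≤ 11/9 := by norm_num
  have hpos : (0:ℝ) < 11/9 := by norm_num
  have step1 : ((univ.filter (fun b : Fin n → Bool => ¬ ((9/20:ℝ)*n < ob b))).card : ℝ)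
      ≤ ∑ b : Fin n → Bool, (11/9:ℝ)^((9/20:ℝ)*n - (ob b : ℝ)) := by
    rw [Finset.card_eq_sum_ones, Nat.cast_sum]
    refine le_trans (Finset.sum_le_sum fun b hb' => ?_)
      (Finset.sum_le_sum_of_subset_of_nonneg (Finset.filter_subset _ _)
        fun b _ _ => by positivity)
    simp only [Finset.mem_filter, not_lt] at hb'
    calc ((1:ℕ):ℝ) = (11/9:ℝ)^(0:ℝ) := by rw [Real.rpow_zero]; norm_num
    _ ≤ _ := Real.rpow_le_rpow_of_exponent_le hb1 (by linarith [hb'.2])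
  have heach : ∀ b : Fin n → Bool, (11/9:ℝ)^((9/20:ℝ)*n - (ob b : ℝ))
      = (11/9:ℝ)^((9/20:ℝ)*n) * (9/11:ℝ)^(ob b) := by
    intro b
    rw [Real.rpow_sub hpos, Real.rpow_natCast, div_eq_mul_inv]
    congr 1
    rw [← inv_pow]
    norm_num
  have step2 : ∑ b : Fin n → Bool, (11/9:ℝ)^((9/20:ℝ)*n - (ob b : ℝ))
      = (11/9:ℝ)^((9/20:ℝ)*n) * (20/11:ℝ)^n := by
    rw [Finset.sum_congr rfl fun b _ => heach b, ← Finset.mul_sum, sum_pow_ob]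
    norm_num
  have step3 : (11/9:ℝ)^((9/20:ℝ)*n) * (20/11:ℝ)^n = BBC ^ n := by
    have : (11/9:ℝ)^((9/20:ℝ)*n) = ((11/9:ℝ)^((9/20:ℝ)))^n := by
      rw [← Real.rpow_natCast ((11/9:ℝ)^((9/20:ℝ))) n, ← Real.rpow_mul hpos.le]
    rw [this, BBC, mul_pow]
  rw [step2, step3] at step1
  exact step1

lemma rrC_lt_one : rrC < 1 := by
  have h20 : rrC ^ 20 < 1 := by
    have h1 : ((27/22:ℝ)^(-(9/20:ℝ)))^(20:ℕ) = ((27/22:ℝ)^(9:ℕ))⁻¹ := by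
      rw [← Real.rpow_natCast ((27/22:ℝ)^(-(9/20:ℝ))) 20, ← Real.rpow_mul (by norm_num : (0:ℝ) ≤ 27/22),
        show (-(9/20:ℝ))*(20:ℕ) = -((9:ℕ):ℝ) by push_cast; norm_num,
        Real.rpow_neg (by norm_num : (0:ℝ) ≤ 27/22), Real.rpow_natCast]
    rw [rrC, mul_pow, h1]
    norm_num
  by_contra h
  push_neg at h
  have : (1:ℝ) ≤ rrC ^ 20 := one_le_pow₀ h
  linarith

lemma BBC_pos : 0 < BBC := by unfold BBC; positivity

lemma one_lt_BBC : 1 < BBC := by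
  have h1 : (1:ℝ) ≤ (11/9:ℝ)^((9/20:ℝ)) :=
    Real.one_le_rpow (by norm_num) (by norm_num)
  unfold BBC
  nlinarith

lemma theta_lt : Real.logb 2 BBC < 1000/1003 := by
  rw [Real.logb_lt_iff_lt_rpow one_lt_two BBC_pos]
  have h0 : (0:ℝ) ≤ (2:ℝ)^((1000/1003:ℝ)) := (Real.rpow_pos_of_pos two_pos _).le
  refine lt_of_pow_lt_pow_left₀ 20060 h0 ?_
  have hR : ((2:ℝ)^((1000/1003:ℝ)))^(20060:ℕ) = (2:ℝ)^(20000:ℕ) := by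
    rw [← Real.rpow_natCast ((2:ℝ)^((1000/1003:ℝ))) 20060, ← Real.rpow_mul two_pos.le,
      show (1000/1003:ℝ)*(20060:ℕ) = ((20000:ℕ):ℝ) by push_cast; norm_num, Real.rpow_natCast]
  have hF : ((11/9:ℝ)^((9/20:ℝ)))^(20060:ℕ) = (11/9:ℝ)^(9027:ℕ) := by
    rw [← Real.rpow_natCast ((11/9:ℝ)^((9/20:ℝ))) 20060, ← Real.rpow_mul (by norm_num : (0:ℝ) ≤ 11/9),
      show (9/20:ℝ)*(20060:ℕ) = ((9027:ℕ):ℝ) by push_cast; norm_num, Real.rpow_natCast]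
  have hL : BBC^(20060:ℕ) = (11/9:ℝ)^(9027:ℕ) * (20/11:ℝ)^(20060:ℕ) := by
    rw [BBC, mul_pow, hF]
  rw [hR, hL]
  rw [div_pow, div_pow, div_mul_div_comm, div_lt_iff₀ (by positivity)]
  have : (11:ℝ)^(9027:ℕ) * 20^(20060:ℕ) < 2^(20000:ℕ) * (9^(9027:ℕ) * 11^(20060:ℕ)) := by
    exact_mod_cast (by decide +kernel : (11:ℕ)^9027 * 20^20060 < 2^20000 * (9^9027 * 11^20060))
  exact this


def bext (n : ℕ) (b : Fin n → Bool) : ℕ → ℤ :=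
  fun i => if h : i < n then (if b ⟨i, h⟩ then 1 else 0) else 0

def bcyl (n : ℕ) (b : Fin n → Bool) : Set (ℕ → ℤ) :=
  {ω | ∀ i < n, ω i = bext n b i}

lemma bcyl_measurableSet (n : ℕ) (b : Fin n → Bool) : MeasurableSet (bcyl n b) := by
  have h : bcyl n b = ⋂ (i : ℕ) (_ : i < n), (fun ω : ℕ → ℤ => ω i) ⁻¹' {bext n b i} := by
    ext ω; simp [bcyl, Set.mem_iInter]
  rw [h]
  exact MeasurableSet.iInter fun i => MeasurableSet.iInter fun _ =>
    (measurable_pi_apply i) MeasurableSet.of_discrete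

lemma bcyl_disjoint (n : ℕ) {b b' : Fin n → Bool} (h : b ≠ b') :
    Disjoint (bcyl n b) (bcyl n b') := by
  rw [Set.disjoint_left]
  rintro ω hω hω'
  apply h
  funext i
  have h1 := hω i.1 i.2
  have h2 := hω' i.1 i.2
  rw [h1] at h2
  simp only [bext, i.2, dif_pos, Fin.eta] at h2
  by_cases hb : b i <;> by_cases hb' : b' i <;> simp_all

lemma meas_bcyl (ν : Measure (ℕ → ℤ)) (hν : IsBiasedProductMeasure ν) (n : ℕ) (b : Fin n → Bool) :
    ν (bcyl n b) = ∏ i : Fin n, (if b i then (2/5 : ENNReal) else 3/5) := by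
  rw [bcyl, hν n (bext n b),
    ← Fin.prod_univ_eq_prod_range
      (fun i => if bext n b i = 1 then (2/5 : ENNReal) else if bext n b i = 0 then 3/5 else 0) n]
  refine Finset.prod_congr rfl fun i _ => ?_
  simp only [bext, i.2, dif_pos, Fin.eta]
  by_cases hb : b i <;> simp [hb]

lemma meas_bcyl_toReal (ν : Measure (ℕ → ℤ)) (hν : IsBiasedProductMeasure ν) (n : ℕ)
    (b : Fin n → Bool) : (ν (bcyl n b)).toReal = wR n b := by
  rw [meas_bcyl ν hν, ENNReal.toReal_prod, wR]
  refine Finset.prod_congr rfl fun i _ => ?_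
  by_cases hb : b i <;> simp [hb, ENNReal.toReal_div]

lemma meas_univ (ν : Measure (ℕ → ℤ)) (hν : IsBiasedProductMeasure ν) : ν Set.univ = 1 := by
  have h := hν 0 (fun _ => 0)
  have hset : {ω : ℕ → ℤ | ∀ i < 0, ω i = 0} = Set.univ := by ext ω; simp
  rw [hset] at h
  simpa using h

lemma cdgX_bcyl (n : ℕ) (b : Fin n → Bool) {ω : ℕ → ℤ} (hω : ω ∈ bcyl n b) :
    cdgX n ω = cdgX n (bext n b) :=
  Finset.sum_congr rfl fun i hi => by rw [hω i (Finset.mem_range.mp hi)]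

lemma cdgX_measurable (n : ℕ) : Measurable (cdgX n) :=
  Finset.measurable_sum _ fun i _ => (measurable_pi_apply i).const_mul _

lemma Es_measurable (n p : ℕ) (z : ZMod p) :
    MeasurableSet {ω : ℕ → ℤ | ((cdgX n ω : ZMod p)) = z} :=
  (cdgX_measurable n) (MeasurableSet.of_discrete (s := {x : ℤ | (x : ZMod p) = z}))

lemma tv_lower (ν : Measure (ℕ → ℤ)) (hν : IsBiasedProductMeasure ν) (n p : ℕ) (hp : 3 ≤ p)
    (T : Finset (Fin n → Bool)) :
    (∑ b ∈ T, wR n b) - (T.card : ℝ) / p ≤ cdgTV ν n p := by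
  classical
  haveI : NeZero p := ⟨by omega⟩
  have hνtop : ∀ s : Set (ℕ → ℤ), ν s ≤ 1 := fun s => by
    rw [← meas_univ ν hν]; exact measure_mono (Set.subset_univ s)
  have hνne : ∀ s : Set (ℕ → ℤ), ν s ≠ ⊤ :=
    fun s => ((hνtop s).trans_lt (by norm_num)).ne
  set Q : ℕ → ℝ := fun s => (ν {ω : ℕ → ℤ | ((cdgX n ω : ZMod p)) = (s : ZMod p)}).toReal with hQ
  have hQ0 : ∀ s, 0 ≤ Q s := fun s => ENNReal.toReal_nonneg
  set res : (Fin n → Bool) → ℕ := fun b => ((cdgX n (bext n b) : ZMod p)).val with hres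
  set A : Finset ℕ := T.image res with hA
  have hAr : A ⊆ Finset.range p := fun s hs => Finset.mem_range.mpr (by
    obtain ⟨b, _, rfl⟩ := Finset.mem_image.mp hs; exact ZMod.val_lt _)
  have hfiber : ∀ s ∈ A, ∑ b ∈ T.filter (fun b => res b = s), wR n b ≤ Q s := by
    intro s hs
    have hsub : ∀ b ∈ T.filter (fun b => res b = s),
        bcyl n b ⊆ {ω : ℕ → ℤ | ((cdgX n ω : ZMod p)) = (s : ZMod p)} := by
      intro b hb ω hω
      obtain ⟨-, hbs⟩ := Finset.mem_filter.mp hb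
      show ((cdgX n ω : ZMod p)) = (s : ZMod p)
      rw [cdgX_bcyl n b hω, ← hbs]
      exact (ZMod.natCast_rightInverse (n := p) _).symm
    have hmeas := measure_biUnion_finset (μ := ν)
      (s := T.filter (fun b => res b = s)) (f := fun b => bcyl n b)
      (fun b _ b' _ hne => bcyl_disjoint n hne)
      (fun b _ => bcyl_measurableSet n b)
    have hle : ν (⋃ b ∈ T.filter (fun b => res b = s), bcyl n b)
        ≤ ν {ω : ℕ → ℤ | ((cdgX n ω : ZMod p)) = (s : ZMod p)} :=
      measure_mono (Set.iUnion₂_subset hsub)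
    rw [hmeas] at hle
    calc ∑ b ∈ T.filter (fun b => res b = s), wR n b
        = (∑ b ∈ T.filter (fun b => res b = s), ν (bcyl n b)).toReal := by
          rw [ENNReal.toReal_sum (fun b _ => hνne _)]
          exact (Finset.sum_congr rfl fun b _ => meas_bcyl_toReal ν hν n b).symm
      _ ≤ Q s := ENNReal.toReal_mono (hνne _) hle
  have htot : ∑ s ∈ Finset.range p, Q s ≤ 1 := by
    have hdisj : (↑(Finset.range p) : Set ℕ).PairwiseDisjoint
        (fun s : ℕ => {ω : ℕ → ℤ | ((cdgX n ω : ZMod p)) = (s : ZMod p)}) := by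
      intro s hs t ht hst
      simp only [Finset.coe_range, Set.mem_Iio] at hs ht
      refine Set.disjoint_left.mpr fun ω h1 h2 => hst ?_
      have hst' : (s : ZMod p) = (t : ZMod p) := by
        rw [← h1, ← h2]
      calc s = (ZMod.val ((s : ZMod p))) := (ZMod.val_cast_of_lt hs).symm
        _ = (ZMod.val ((t : ZMod p))) := by rw [hst']
        _ = t := ZMod.val_cast_of_lt ht
    have hun := measure_biUnion_finset (μ := ν) hdisj (fun s _ => Es_measurable n p _)
    have hle : ∑ s ∈ Finset.range p, ν {ω : ℕ → ℤ | ((cdgX n ω : ZMod p)) = (s : ZMod p)} ≤ 1 :=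
      hun ▸ hνtop _
    calc ∑ s ∈ Finset.range p, Q s
        = (∑ s ∈ Finset.range p, ν {ω : ℕ → ℤ | ((cdgX n ω : ZMod p)) = (s : ZMod p)}).toReal :=
          (ENNReal.toReal_sum (fun s _ => hνne _)).symm
      _ ≤ (1 : ENNReal).toReal := ENNReal.toReal_mono (by norm_num) hle
      _ = 1 := by simp
  have hSA : ∑ b ∈ T, wR n b ≤ ∑ s ∈ A, Q s := by
    rw [← Finset.sum_fiberwise_of_maps_to (fun b hb => Finset.mem_image_of_mem res hb) (wR n)]
    exact Finset.sum_le_sum hfiber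
  have hp0 : (0:ℝ) < p := by positivity
  have habs1 : ∑ s ∈ A, (Q s - 1/(p:ℝ)) ≤ ∑ s ∈ A, |Q s - 1/(p:ℝ)| :=
    Finset.sum_le_sum fun s _ => le_abs_self _
  have habs2 : ∑ s ∈ Finset.range p \ A, (1/(p:ℝ) - Q s)
      ≤ ∑ s ∈ Finset.range p \ A, |Q s - 1/(p:ℝ)| :=
    Finset.sum_le_sum fun s _ => by rw [abs_sub_comm]; exact le_abs_self _
  have hsplit : ∑ s ∈ Finset.range p \ A, |Q s - 1/(p:ℝ)| + ∑ s ∈ A, |Q s - 1/(p:ℝ)|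
      = ∑ s ∈ Finset.range p, |Q s - 1/(p:ℝ)| := Finset.sum_sdiff hAr
  have hQsplit : ∑ s ∈ Finset.range p \ A, Q s + ∑ s ∈ A, Q s = ∑ s ∈ Finset.range p, Q s :=
    Finset.sum_sdiff hAr
  have hcard : (A.card : ℝ) ≤ T.card := by exact_mod_cast Finset.card_image_le
  have hcardAp : A.card ≤ p := by
    have := Finset.card_le_card hAr
    simpa using this
  have hsum1 : ∑ s ∈ A, (Q s - 1/(p:ℝ)) = ∑ s ∈ A, Q s - A.card * (1/(p:ℝ)) := by
    rw [Finset.sum_sub_distrib, Finset.sum_const, nsmul_eq_mul]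
  have hsum2 : ∑ s ∈ Finset.range p \ A, (1/(p:ℝ) - Q s)
      = ((p : ℝ) - A.card) * (1/(p:ℝ)) - ∑ s ∈ Finset.range p \ A, Q s := by
    rw [Finset.sum_sub_distrib, Finset.sum_const, nsmul_eq_mul, Finset.card_sdiff_of_subset hAr,
      Finset.card_range, Nat.cast_sub hcardAp]
  have hTV : cdgTV ν n p = (1/2) * ∑ s ∈ Finset.range p, |Q s - 1/(p:ℝ)| := rfl
  have hdivle : (A.card : ℝ)/p ≤ (T.card : ℝ)/p := by gcongr
  have hppos : (p:ℝ) * (1/(p:ℝ)) = 1 := by field_simp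
  rw [hTV]
  have hAQ : ∑ s ∈ Finset.range p \ A, Q s ≤ 1 - ∑ s ∈ A, Q s := by linarith
  have e1 : ((A.card:ℝ)) * (1/(p:ℝ)) = (A.card:ℝ)/p := by ring
  have e2 : ((p:ℝ) - A.card) * (1/(p:ℝ)) = 1 - (A.card:ℝ)/p := by
    field_simp
  linarith [hSA, habs1, habs2, hsplit, htot, hsum1, hsum2, hdivle, hAQ]

/-- there is a constant `c₂ > 1` such that whenever `n : ℕ → ℕ` satisfies
`n p < c₂ · log₂ p` for all odd `p ≥ 3`, the total variation distance
`‖Q_{n(p),p} − U‖ → 1` as `p → ∞` along odd integers: for every `δ > 0` there is `P₀`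
such that `‖Q_{n(p),p} − U‖ > 1 − δ` for every odd `p ≥ max(P₀, 3)`. -/
theorem stmt_1 (ν : Measure (ℕ → ℤ)) (hν : IsBiasedProductMeasure ν) :
    ∃ c₂ : ℝ, 1 < c₂ ∧
      ∀ n : ℕ → ℕ, (∀ p : ℕ, 3 ≤ p → Odd p → (n p : ℝ) < c₂ * Real.logb 2 p) →
        ∀ δ : ℝ, 0 < δ → ∃ P₀ : ℕ, ∀ p : ℕ, P₀ ≤ p → 3 ≤ p → Odd p →
          1 - δ < cdgTV ν (n p) p := by
  classical
  refine ⟨1003/1000, by norm_num, ?_⟩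
  intro n hn δ hδ
  set θ : ℝ := (1003/1000) * Real.logb 2 BBC with hθ
  have hθ1 : θ < 1 := by
    have h := theta_lt
    rw [hθ]; linarith
  obtain ⟨N, hN⟩ : ∃ N : ℕ, rrC ^ N < δ/2 := by
    have h := tendsto_pow_atTop_nhds_zero_of_lt_one rrC_pos.le rrC_lt_one
    exact (h.eventually_lt_const (by linarith : (0:ℝ) < δ/2)).exists
  have hev1 : ∀ᶠ p : ℕ in Filter.atTop, ((p:ℝ)) ^ (θ - 1) < δ/2 := by
    have h0 : (0:ℝ) < 1 - θ := by linarith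
    have h : Filter.Tendsto (fun p : ℕ => ((p:ℝ))^(θ-1)) Filter.atTop (nhds 0) := by
      have h2 := (tendsto_rpow_neg_atTop h0).comp (tendsto_natCast_atTop_atTop (R := ℝ))
      have he : θ - 1 = -(1-θ) := by ring
      rw [he]
      exact h2
    exact h.eventually_lt_const (by linarith)
  have hev2 : ∀ᶠ p : ℕ in Filter.atTop, ((2:ℝ)^N)/(p:ℝ) < δ :=
    (tendsto_const_div_atTop_nhds_zero_nat ((2:ℝ)^N)).eventually_lt_const hδ
  obtain ⟨P₀, hP₀⟩ := Filter.eventually_atTop.mp (hev1.and hev2)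
  refine ⟨P₀, fun p hpP hp3 hodd => ?_⟩
  obtain ⟨h1, h2⟩ := hP₀ p hpP
  have hp0 : (0:ℝ) < p := by
    have : (3:ℝ) ≤ p := by exact_mod_cast hp3
    linarith
  have hplt : ((n p : ℕ) : ℝ) < (1003/1000) * Real.logb 2 p := hn p hp3 hodd
  rcases le_or_gt (n p) N with hmN | hmN
  · -- small case : use all strings
    have key := tv_lower ν hν (n p) p hp3 Finset.univ
    rw [sum_wR_univ] at key
    have hcard : ((Finset.univ : Finset (Fin (n p) → Bool)).card : ℝ) = 2^(n p) := by
      simp [Finset.card_univ]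
    rw [hcard] at key
    have hmono : (2:ℝ)^(n p) ≤ 2^N := by
      apply pow_le_pow_right₀ (by norm_num) hmN
    have : (2:ℝ)^(n p)/p ≤ (2:ℝ)^N/p := by gcongr
    linarith
  · -- large case : typical strings
    set T := Finset.univ.filter (fun b : Fin (n p) → Bool => ¬ ((9/20:ℝ)*(n p) < ob b)) with hT
    have key := tv_lower ν hν (n p) p hp3 T
    have hsum : 1 - rrC^(n p) ≤ ∑ b ∈ T, wR (n p) b := by
      have hs := Finset.sum_filter_add_sum_filter_not Finset.univ
        (fun b : Fin (n p) → Bool => (9/20:ℝ)*(n p) < ob b) (wR (n p))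
      have htail := tail_bound (n p)
      have hu : ∑ b ∈ Finset.univ, wR (n p) b = 1 := sum_wR_univ (n p)
      rw [hu] at hs
      rw [hT]
      linarith
    have hcount : (T.card : ℝ) ≤ BBC ^ (n p) := count_bound (n p)
    have hBB : BBC ^ (n p) ≤ (p:ℝ)^θ := by
      calc BBC ^ (n p) = BBC ^ (((n p : ℕ)):ℝ) := (Real.rpow_natCast _ _).symm
        _ ≤ BBC ^ ((1003/1000) * Real.logb 2 p) :=
            Real.rpow_le_rpow_of_exponent_le one_lt_BBC.le hplt.le
        _ = (p:ℝ)^θ := by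
            rw [← Real.rpow_logb two_pos (by norm_num) BBC_pos, ← Real.rpow_mul two_pos.le,
              show Real.logb 2 BBC * ((1003/1000) * Real.logb 2 (p:ℝ))
                  = Real.logb 2 (p:ℝ) * θ by rw [hθ]; ring,
              Real.rpow_mul two_pos.le, Real.rpow_logb two_pos (by norm_num) hp0]
    have hfrac : (T.card : ℝ)/p ≤ (p:ℝ)^(θ-1) := by
      have hq : (T.card : ℝ)/p ≤ (p:ℝ)^θ/p := by
        gcongr
        exact hcount.trans hBB
      have he : (p:ℝ)^θ/p = (p:ℝ)^(θ-1) := by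
        rw [Real.rpow_sub hp0, Real.rpow_one]
      linarith
    have htl : rrC^(n p) ≤ rrC^N := pow_le_pow_of_le_one rrC_pos.le rrC_lt_one.le hmN.le
    linarith [key, hsum, hfrac, htl, h1, hN]
end

section
/- Suppose the sequence b is in the case 'first 1' for length n. Then there is no a ∈ {1, …, n−1} such that b̃_{a-1} = 1, b̃_a = 1, b_{a-1} = 1, and b_a ≠ 1. Equivalently, the number n₂ of such a is zero. -/
/-- `S n b = ∑_{i=0}^{n-1} 2^(n-1-i) b i`. -/
def cdgS (n : ℕ) (b : ℕ → ℤ) : ℤ := ∑ i ∈ Finset.range n, 2 ^ (n - 1 - i) * b i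

/-- The standard form `b̃ a` of the sequence `b` for length `n`: the binary digit of
`S = ∑_{i<n} 2^(n-1-i) b i` in position `n-1-a`, so that (in the "first 1" case, where
`1 ≤ S ≤ 2^n − 1`) one has `S = ∑_{a<n} 2^(n-1-a) b̃ a` with each `b̃ a ∈ {0,1}`. -/
def btilde (n : ℕ) (b : ℕ → ℤ) (a : ℕ) : ℕ := (cdgS n b).toNat / 2 ^ (n - 1 - a) % 2

lemma geom_Ico (s n : ℕ) (h : s ≤ n) :
    ∑ i ∈ Finset.Ico s n, (2:ℤ)^(n-1-i) = 2^(n-s) - 1 := by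
  induction n with
  | zero =>
    have : s = 0 := by omega
    subst this; simp
  | succ n ih =>
    rcases Nat.eq_or_lt_of_le h with h1 | h1
    · subst h1; simp
    · have hs : s ≤ n := by omega
      rw [Finset.sum_Ico_succ_top hs]
      have h2 : ∀ i ∈ Finset.Ico s n, (2:ℤ)^(n+1-1-i) = 2 * 2^(n-1-i) := by
        intro i hi
        simp only [Finset.mem_Ico] at hi
        rw [← pow_succ']
        congr 1
        omega
      rw [Finset.sum_congr rfl h2, ← Finset.mul_sum, ih hs]
      have h3 : (2:ℤ)^(n+1-s) = 2 * 2^(n-s) := by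
        rw [← pow_succ']; congr 1; omega
      have h4 : n + 1 - 1 - n = 0 := by omega
      rw [h4, h3]; ring

lemma sum_lower (b : ℕ → ℤ) (hb : ∀ i, -1 ≤ b i) (s n : ℕ) (h : s ≤ n) :
    -(2^(n-s) - 1) ≤ ∑ i ∈ Finset.Ico s n, 2^(n-1-i) * b i := by
  have : ∑ i ∈ Finset.Ico s n, -((2:ℤ)^(n-1-i)) ≤ ∑ i ∈ Finset.Ico s n, 2^(n-1-i) * b i := by
    apply Finset.sum_le_sum
    intro i _
    have := hb i
    nlinarith [pow_pos (by norm_num : (0:ℤ) < 2) (n-1-i)]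
  rw [Finset.sum_neg_distrib, geom_Ico s n h] at this
  exact this

lemma sum_upper (b : ℕ → ℤ) (hb : ∀ i, b i ≤ 1) (s n : ℕ) (h : s ≤ n) :
    ∑ i ∈ Finset.Ico s n, 2^(n-1-i) * b i ≤ 2^(n-s) - 1 := by
  have : ∑ i ∈ Finset.Ico s n, 2^(n-1-i) * b i ≤ ∑ i ∈ Finset.Ico s n, (2:ℤ)^(n-1-i) := by
    apply Finset.sum_le_sum
    intro i _
    have := hb i
    nlinarith [pow_pos (by norm_num : (0:ℤ) < 2) (n-1-i)]
  rw [geom_Ico s n h] at this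
  exact this

lemma cdgS_pos (n : ℕ) (b : ℕ → ℤ)
    (hb : ∀ i, b i = -1 ∨ b i = 0 ∨ b i = 1)
    (hfirst : ∃ j < n, b j = 1 ∧ ∀ k < j, b k = 0) : 1 ≤ cdgS n b := by
  obtain ⟨j, hj, hbj, hz⟩ := hfirst
  have hlow : ∀ i, -1 ≤ b i := fun i => by rcases hb i with h|h|h <;> omega
  unfold cdgS
  rw [Finset.range_eq_Ico, ← Finset.sum_Ico_consecutive _ (Nat.zero_le j) (le_of_lt hj)]
  have hz' : ∑ i ∈ Finset.Ico 0 j, (2:ℤ)^(n-1-i) * b i = 0 := by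
    apply Finset.sum_eq_zero
    intro i hi
    simp only [Finset.mem_Ico] at hi
    rw [hz i hi.2, mul_zero]
  rw [hz', zero_add, Finset.sum_eq_sum_Ico_succ_bot hj, hbj, mul_one]
  have h1 := sum_lower b hlow (j+1) n hj
  have h2 : n - (j+1) = n - 1 - j := by omega
  rw [h2] at h1
  have h3 : (0:ℤ) < 2^(n-1-j) := pow_pos (by norm_num) _
  linarith

/-- if the sequence `b` (with values in `{-1,0,1}`) is in the case
"first 1" for length `n ≥ 1`, then there is no `a ∈ {1,…,n−1}` with `b̃_{a-1} = 1`,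
`b̃_a = 1`, `b_{a-1} = 1` and `b_a ≠ 1`; equivalently, the number `n₂` of such `a`
is zero. -/
theorem stmt_6 (n : ℕ) (hn : 1 ≤ n) (b : ℕ → ℤ)
    (hb : ∀ i, b i = -1 ∨ b i = 0 ∨ b i = 1)
    (hfirst : ∃ j < n, b j = 1 ∧ ∀ k < j, b k = 0) :
    (¬∃ a, 1 ≤ a ∧ a < n ∧
        btilde n b (a - 1) = 1 ∧ btilde n b a = 1 ∧ b (a - 1) = 1 ∧ b a ≠ 1) ∧
    ((Finset.Ico 1 n).filter (fun a =>
        btilde n b (a - 1) = 1 ∧ btilde n b a = 1 ∧ b (a - 1) = 1 ∧ b a ≠ 1)).card = 0 := by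
  have key : ¬∃ a, 1 ≤ a ∧ a < n ∧
      btilde n b (a - 1) = 1 ∧ btilde n b a = 1 ∧ b (a - 1) = 1 ∧ b a ≠ 1 := by
    rintro ⟨a, ha1, han, ht1, ht2, hba1, hba⟩
    set m := n - 1 - a with hm
    have hlow : ∀ i, -1 ≤ b i := fun i => by rcases hb i with h|h|h <;> omega
    have hup : ∀ i, b i ≤ 1 := fun i => by rcases hb i with h|h|h <;> omega
    have hba0 : b a ≤ 0 := by rcases hb a with h|h|h <;> omega
    have hSpos := cdgS_pos n b hb hfirst
    set S := cdgS n b with hS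
    -- decompose S
    have hsplit : S = (∑ i ∈ Finset.range (a-1), 2^(n-1-i) * b i) + 2^(m+1)
        + ∑ i ∈ Finset.Ico a n, 2^(n-1-i) * b i := by
      rw [hS]
      unfold cdgS
      rw [Finset.range_eq_Ico, ← Finset.sum_Ico_consecutive _ (Nat.zero_le a) (le_of_lt han),
        ← Finset.range_eq_Ico]
      have ha' : a = (a - 1) + 1 := by omega
      rw [ha', Finset.sum_range_succ, ← ha']
      have : n - 1 - (a - 1) = m + 1 := by omega
      rw [this, hba1, mul_one]
    -- the head is divisible by 2^(m+2)
    obtain ⟨q, hq⟩ : (2:ℤ)^(m+2) ∣ ∑ i ∈ Finset.range (a-1), 2^(n-1-i) * b i := by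
      apply Finset.dvd_sum
      intro i hi
      simp only [Finset.mem_range] at hi
      have : 2^(m+2) ∣ (2:ℤ)^(n-1-i) := pow_dvd_pow 2 (by omega)
      exact Dvd.dvd.mul_right this _
    -- bounds on the tail
    set T := ∑ i ∈ Finset.Ico a n, 2^(n-1-i) * b i with hT
    have hTlow : -(2^(m+1) - 1) ≤ T := by
      have := sum_lower b hlow a n (le_of_lt han)
      have h2 : n - a = m + 1 := by omega
      rwa [h2] at this
    have hThigh : T ≤ 2^m - 1 := by
      rw [hT, Finset.sum_eq_sum_Ico_succ_bot han]
      have h1 := sum_upper b hup (a+1) n (by omega)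
      have h2 : n - (a+1) = m := by omega
      rw [h2] at h1
      have h3 : n - 1 - a = m := hm.symm
      rw [h3]
      have h4 : (2:ℤ)^m * b a ≤ 0 := mul_nonpos_of_nonneg_of_nonpos (by positivity) hba0
      linarith
    -- compute S % 2^(m+2)
    have hmod : S % 2^(m+2) = 2^(m+1) + T := by
      rw [hsplit, hq]
      have hx0 : (0:ℤ) ≤ 2^(m+1) + T := by
        have : (0:ℤ) < 2^(m+1) := pow_pos (by norm_num) _
        linarith
      have hx1 : 2^(m+1) + T < 2^(m+2) := by
        have e1 : (2:ℤ)^(m+2) = 2 * 2 * 2^m := by ring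
        have e2 : (2:ℤ)^(m+1) = 2 * 2^m := by ring
        have : (0:ℤ) < 2^m := pow_pos (by norm_num) _
        rw [e1]; rw [e2] at *
        linarith
      have e : (2:ℤ)^(m+2) * q + 2^(m+1) + T = 2^(m+1) + T + 2^(m+2) * q := by ring
      rw [e, Int.add_mul_emod_self_left, Int.emod_eq_of_lt hx0 hx1]
    -- translate btilde hypotheses to ℕ
    set N := S.toNat with hN
    have hNS : (N : ℤ) = S := Int.toNat_of_nonneg (by linarith)
    have hd1 : N / 2^(m+1) % 2 = 1 := by
      have : n - 1 - (a - 1) = m + 1 := by omega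
      unfold btilde at ht1
      rwa [this] at ht1
    have hd0 : N / 2^m % 2 = 1 := by
      unfold btilde at ht2
      exact ht2
    -- N % 2^(m+2) ≥ 3 * 2^m
    have hge : 3 * 2^m ≤ N % 2^(m+2) := by
      have hq4 : N / 2^m % 4 = 3 := by
        have e : N / 2^(m+1) = N / 2^m / 2 := by
          rw [Nat.div_div_eq_div_mul, pow_succ]
        rw [e] at hd1
        omega
      have e2 : (2:ℕ)^(m+2) = 2^m * 4 := by ring
      have e3 : N % (2^m * 4) / 2^m = N / 2^m % 4 := Nat.mod_mul_right_div_self N (2^m) 4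
      rw [e2]
      rw [hq4] at e3
      have hpos : 0 < (2:ℕ)^m := pow_pos (by norm_num) _
      calc 3 * 2^m = (N % (2^m * 4)) / 2^m * 2^m := by rw [e3]
        _ ≤ N % (2^m * 4) := Nat.div_mul_le_self _ _
    -- but S % 2^(m+2) < 3 * 2^m; contradiction
    have hcast : ((N % 2^(m+2) : ℕ) : ℤ) = S % 2^(m+2) := by
      push_cast [hNS]
      rfl
    have hfin : (3:ℤ) * 2^m ≤ 2^(m+1) + T := by
      rw [← hmod, ← hcast]
      exact_mod_cast (by exact_mod_cast hge : ((3 * 2^m : ℕ) : ℤ) ≤ (N % 2^(m+2) : ℕ))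
    have e2 : (2:ℤ)^(m+1) = 2 * 2^m := by ring
    rw [e2] at hfin
    linarith
  refine ⟨key, ?_⟩
  rw [Finset.card_eq_zero, Finset.filter_eq_empty_iff]
  intro a ha
  simp only [Finset.mem_Ico] at ha
  intro hcontra
  exact key ⟨a, ha.1, ha.2, hcontra.1, hcontra.2.1, hcontra.2.2.1, hcontra.2.2.2⟩
end
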